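/- For all complex z with |z - 1/2| ≤ 1/2, z ≠ 0, z ≠ 1, and all integers n ≥ 2, the strict inequality |z^n - 1| > |z - 1| holds. -/

import Mathlib

set_option maxHeartbeats 1000000

open Real

/-- Numeric key lemma: for m ≥ 4, (m-2)·sin(π/(m+1)) ≥ 1. -/
lemma sin_key (m : ℕ) (hm : 4 ≤ m) : 1 ≤ ((m : ℝ) - 2) * Real.sin (π / (m + 1)) := by
  have hM : (4 : ℝ) ≤ (m : ℝ) := by exact_mod_cast hm
  have hpi1 : 3.14 < π := Real.pi_gt_d2
  have hpi2 : π < 3.15 := Real.pi_lt_d2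
  set M : ℝ := (m : ℝ) with hMdef
  have hM1 : (5 : ℝ) ≤ M + 1 := by linarith
  have hM1pos : (0 : ℝ) < M + 1 := by linarith
  set t : ℝ := π / (M + 1) with htdef
  have ht0 : 0 < t := by positivity
  have htM : t * (M + 1) = π := by rw [htdef, div_mul_cancel₀ _ hM1pos.ne']
  have ht1 : t ≤ 1 := by
    rw [htdef, div_le_one hM1pos]; linarith
  have hsin : t - t ^ 3 / 4 < Real.sin t := by
    have := Real.sin_gt_sub_cube ht0; linarith [pow_pos ht0 3]
  have hpisq : π ^ 2 < 9.9225 := by nlinarith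
  have hpicube : π ^ 3 < 31.26 := by nlinarith
  have hK : (0 : ℝ) ≤ M - 4 := by linarith
  have hbound : 3.14 * (M + 1) ^ 2 - 7.815 ≤ π * (M + 1) ^ 2 - π ^ 3 / 4 := by
    nlinarith [sq_nonneg (M + 1)]
  have hpoly : (M + 1) ^ 3 ≤ (M - 2) * (3.14 * (M + 1) ^ 2 - 7.815) := by
    nlinarith [mul_nonneg (mul_nonneg hK hK) hK, mul_nonneg hK hK, hK]
  have hP : (M + 1) ^ 3 ≤ (M - 2) * (π * (M + 1) ^ 2 - π ^ 3 / 4) :=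
    le_trans hpoly (mul_le_mul_of_nonneg_left hbound (by linarith))
  have hP2 : 1 * (M + 1) ^ 3 ≤ ((M - 2) * (t - t ^ 3 / 4)) * (M + 1) ^ 3 := by
    have heq : ((M - 2) * (t - t ^ 3 / 4)) * (M + 1) ^ 3
        = (M - 2) * ((t * (M + 1)) * (M + 1) ^ 2 - (t * (M + 1)) ^ 3 / 4) := by ring
    rw [heq, htM]; linarith
  have h3pos : (0 : ℝ) < (M + 1) ^ 3 := by positivity
  have hQ : 1 ≤ (M - 2) * (t - t ^ 3 / 4) := le_of_mul_le_mul_right hP2 h3pos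
  have hM2 : (0 : ℝ) < M - 2 := by linarith
  have := mul_lt_mul_of_pos_left hsin hM2
  linarith

/-- Monotonicity lemma: if 0 ≤ ψ and (m+1)ψ ≤ 2π with m ≥ 1, then cos(mψ) ≤ cos ψ. -/
lemma cos_nmul_le (m : ℕ) (hm : 1 ≤ m) (ψ : ℝ) (h0 : 0 ≤ ψ)
    (h : ((m : ℝ) + 1) * ψ ≤ 2 * π) : Real.cos ((m : ℝ) * ψ) ≤ Real.cos ψ := by
  have hm1 : (1 : ℝ) ≤ (m : ℝ) := by exact_mod_cast hm
  have h2ψ : 2 * ψ ≤ ((m : ℝ) + 1) * ψ :=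
    mul_le_mul_of_nonneg_right (by linarith) h0
  have hψπ : ψ ≤ π := by linarith
  have hmψ : ψ ≤ (m : ℝ) * ψ := le_mul_of_one_le_left h0 hm1
  rcases le_or_gt ((m : ℝ) * ψ) π with h1 | h1
  · exact Real.cos_le_cos_of_nonneg_of_le_pi h0 h1 hmψ
  · rw [← Real.cos_two_pi_sub]
    apply Real.cos_le_cos_of_nonneg_of_le_pi h0 (by linarith) (by linarith)

/-- Case B power lemma: if 1 + r ≤ (m-2)²(1-r), 0 < r, m ≥ 4, then 2 rᵐ - (rᵐ)² < r². -/
lemma caseB_pow (r : ℝ) (m : ℕ) (hm : 4 ≤ m) (hr0 : 0 < r)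
    (h1r : 1 + r ≤ ((m : ℝ) - 2) ^ 2 * (1 - r)) : 2 * r ^ m - (r ^ m) ^ 2 < r ^ 2 := by
  have hM : (4 : ℝ) ≤ (m : ℝ) := by exact_mod_cast hm
  have hr1 : r < 1 := by nlinarith [sq_nonneg ((m : ℝ) - 2)]
  set u : ℝ := Real.sqrt (1 - r ^ 2) with hudef
  have hu0 : 0 ≤ u := Real.sqrt_nonneg _
  have hu2 : u ^ 2 = 1 - r ^ 2 := Real.sq_sqrt (by nlinarith)
  have hu_le : u ≤ ((m : ℝ) - 2) * (1 - r) := by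
    have h1 : (1 : ℝ) - r ^ 2 ≤ (((m : ℝ) - 2) * (1 - r)) ^ 2 := by nlinarith
    calc u ≤ Real.sqrt ((((m : ℝ) - 2) * (1 - r)) ^ 2) := Real.sqrt_le_sqrt h1
    _ = ((m : ℝ) - 2) * (1 - r) :=
      Real.sqrt_sq (mul_nonneg (by linarith) (by linarith))
  set s : ℝ := r ^ (m - 2) with hsdef
  have hs0 : 0 < s := pow_pos hr0 _
  -- Bernoulli: (1/r)^(m-2) ≥ 1 + (m-2)*((1-r)/r)
  have hy0 : (0 : ℝ) ≤ (1 - r) / r := div_nonneg (by linarith) hr0.le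
  have hbern : 1 + ((m - 2 : ℕ) : ℝ) * ((1 - r) / r) ≤ (1 + (1 - r) / r) ^ (m - 2) :=
    one_add_mul_le_pow (by linarith) (m - 2)
  have h1r' : 1 + (1 - r) / r = 1 / r := by field_simp; ring
  have hm2cast : ((m - 2 : ℕ) : ℝ) = (m : ℝ) - 2 := by
    have h2m : 2 ≤ m := by omega
    push_cast [Nat.cast_sub h2m]; ring
  have hinv : 1 + ((m : ℝ) - 2) * ((1 - r) / r) ≤ (1 / r) ^ (m - 2) := by
    rw [← h1r', ← hm2cast]; exact hbern
  have hinv_s : (1 / r) ^ (m - 2) = 1 / s := by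
    rw [hsdef, div_pow, one_pow]
  -- strict: (m-2)(1-r) < (m-2)(1-r)/r
  have hone_lt : (1 : ℝ) < 1 / r := by
    rw [lt_div_iff₀ hr0]; linarith
  have hstrict : ((m : ℝ) - 2) * (1 - r) < ((m : ℝ) - 2) * ((1 - r) / r) := by
    have h2 : (1 - r) * 1 < (1 - r) * (1 / r) :=
      mul_lt_mul_of_pos_left hone_lt (by linarith)
    have h3 : (1 - r) < (1 - r) / r := by
      rw [div_eq_mul_one_div]; linarith
    nlinarith
  have hsu : s * (1 + u) < 1 := by
    have h2 : 1 + u < 1 / s := by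
      rw [← hinv_s]
      calc 1 + u ≤ 1 + ((m : ℝ) - 2) * (1 - r) := by linarith
        _ < 1 + ((m : ℝ) - 2) * ((1 - r) / r) := by linarith
        _ ≤ (1 / r) ^ (m - 2) := hinv
    calc s * (1 + u) < s * (1 / s) := by
          apply mul_lt_mul_of_pos_left h2 hs0
      _ = 1 := by field_simp
  -- factorization
  have hf1 : 0 < 1 - s - s * u := by nlinarith
  have hf2 : 0 < 1 - s + s * u := by nlinarith [mul_nonneg hs0.le hu0]
  have hprod : 0 < (1 - s - s * u) * (1 - s + s * u) := mul_pos hf1 hf2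
  have hkey : 0 < 1 - 2 * s + r ^ 2 * s ^ 2 := by nlinarith
  have hrm : r ^ m = r ^ 2 * s := by
    rw [hsdef, ← pow_add]; congr 1; omega
  rw [hrm]; nlinarith [pow_pos hr0 2, sq_nonneg r]


private lemma sq_reduce (a b A B r R : ℝ) (hr2 : r ^ 2 = a ^ 2 + b ^ 2)
    (hAB : A ^ 2 + B ^ 2 = R ^ 2) (h : 2 * A - R ^ 2 < 2 * a - r ^ 2) :
    (a - 1) * (a - 1) + b * b < (A - 1) * (A - 1) + B * B := by nlinarith

private lemma caseA_core (a r v A : ℝ) (hr0 : 0 < r) (hd : r ^ 2 ≤ a) (hv0 : 0 < v)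
    (hv1 : v < 1) (hAv : A ≤ v * a) : 2 * A - r ^ 2 * v ^ 2 < 2 * a - r ^ 2 := by
  nlinarith [mul_nonneg (sub_nonneg.2 hd) (sub_nonneg.2 hv1.le),
    mul_pos (mul_pos hr0 hr0) (mul_pos (sub_pos.2 hv1) (sub_pos.2 hv1))]

private lemma h1r_core (N r S : ℝ) (h1 : 2 * S ^ 2 < 1 - r) (hk : 1 ≤ (N - 2) * S)
    (hr1 : r ≤ 1) : 1 + r ≤ (N - 2) ^ 2 * (1 - r) := by
  nlinarith [mul_le_mul_of_nonneg_left h1.le (sq_nonneg (N - 2)),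
    mul_le_mul hk hk zero_le_one (le_trans zero_le_one hk)]

private lemma r_le_one (r a : ℝ) (hr0 : 0 < r) (hd : r ^ 2 ≤ a) (har : a ≤ r) : r ≤ 1 := by
  nlinarith

theorem stmt2 (z : ℂ) (hz : ‖z - 1/2‖ ≤ 1/2) (hz0 : z ≠ 0) (hz1 : z ≠ 1)
    (n : ℤ) (hn : 2 ≤ n) : ‖z - 1‖ < ‖z ^ n - 1‖ := by
  lift n to ℕ using by linarith
  rw [zpow_natCast]
  replace hn : 2 ≤ n := by exact_mod_cast hn
  set r : ℝ := ‖z‖ with hrdef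
  set a : ℝ := z.re with hadef
  set b : ℝ := z.im with hbdef
  have hr0 : 0 < r := norm_pos_iff.mpr hz0
  have hr2 : r ^ 2 = a ^ 2 + b ^ 2 := by
    rw [hrdef, Complex.sq_norm, Complex.normSq_apply]; ring
  -- disk condition: a² + b² ≤ a
  have hd : r ^ 2 ≤ a := by
    have h1 : ‖z - 1/2‖ ^ 2 ≤ (1/2 : ℝ) ^ 2 := by
      apply pow_le_pow_left₀ (norm_nonneg _) hz
    rw [Complex.sq_norm, Complex.normSq_apply] at h1
    have hre : (z - 1/2).re = a - 1/2 := by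
      rw [Complex.sub_re, ← hadef]
      norm_num
    have him : (z - 1/2).im = b := by
      rw [Complex.sub_im, ← hbdef]
      norm_num
    rw [hre, him] at h1
    linarith [hr2, h1]
  have ha0 : 0 < a := lt_of_lt_of_le (pow_pos hr0 2) hd
  have har : a ≤ r := Complex.re_le_norm z
  have hr1 : r ≤ 1 := r_le_one r a hr0 hd har
  have hrlt1 : r < 1 := by
    rcases lt_or_eq_of_le hr1 with h | h
    · exact h
    · exfalso
      have hrsq : r ^ 2 = 1 := by rw [h]; norm_num
      have ha1 : a = 1 := le_antisymm (by linarith) (by linarith)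
      have hb2 : b ^ 2 = 0 := by
        have h2 := sq_nonneg b
        have ha2 : a ^ 2 = 1 := by rw [ha1]; norm_num
        linarith [hr2]
      have hb0 : b = 0 := by
        exact pow_eq_zero_iff (two_ne_zero) |>.mp hb2
      exact hz1 (Complex.ext (by rw [Complex.one_re]; linarith)
        (by rw [Complex.one_im]; linarith))
  set A : ℝ := (z ^ n).re with hAdef
  set B : ℝ := (z ^ n).im with hBdef
  set R : ℝ := r ^ n with hRdef
  have habs_pow : ‖z ^ n‖ = R := by
    rw [hRdef, hrdef, norm_pow]
  have hAB : A ^ 2 + B ^ 2 = R ^ 2 := by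
    rw [← habs_pow, Complex.sq_norm, Complex.normSq_apply]; ring
  have hA_le : A ≤ R := by
    rw [← habs_pow]; exact Complex.re_le_norm _
  have hRpos : 0 < R := by rw [hRdef]; positivity
  -- main reduction
  suffices hgoal : 2 * A - R ^ 2 < 2 * a - r ^ 2 by
    apply lt_of_pow_lt_pow_left₀ 2 (norm_nonneg _)
    rw [Complex.sq_norm, Complex.sq_norm, Complex.normSq_apply, Complex.normSq_apply]
    have h1 : (z - 1).re = a - 1 := by rw [Complex.sub_re, Complex.one_re, ← hadef]
    have h2 : (z - 1).im = b := by rw [Complex.sub_im, Complex.one_im, ← hbdef]; ring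
    have h3 : (z ^ n - 1).re = A - 1 := by rw [Complex.sub_re, Complex.one_re, ← hAdef]
    have h4 : (z ^ n - 1).im = B := by rw [Complex.sub_im, Complex.one_im, ← hBdef]; ring
    rw [h1, h2, h3, h4]
    exact sq_reduce a b A B r R hr2 hAB hgoal
  rcases le_or_gt (r * A) (r ^ n * a) with hA | hB
  · -- Case A
    set v : ℝ := r ^ (n - 1) with hvdef
    have hv0 : 0 < v := pow_pos hr0 _
    have hv1 : v < 1 := pow_lt_one₀ hr0.le hrlt1 (by omega)
    have hrn : r ^ n = r * v := by
      rw [hvdef, ← pow_succ']; congr 1; omega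
    have hAv : A ≤ v * a := by
      have h1 : r * A ≤ r * (v * a) := by
        calc r * A ≤ r ^ n * a := hA
          _ = r * (v * a) := by rw [hrn]; ring
      exact le_of_mul_le_mul_left h1 hr0
    have hR2 : R ^ 2 = r ^ 2 * v ^ 2 := by rw [hRdef, hrn]; ring
    rw [hR2]
    exact caseA_core a r v A hr0 hd hv0 hv1 hAv
  · -- Case B
    set φ : ℝ := Complex.arg z with hφdef
    have hφabs : |φ| < π / 2 :=
      Complex.abs_arg_lt_pi_div_two_iff.mpr (Or.inl ha0)
    have hcosφ : r * Real.cos φ = a := by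
      have h := Complex.cos_arg hz0
      rw [← hφdef, ← hadef, ← hrdef] at h
      rw [h]; field_simp
    -- z^n = r^n exp(i n φ)
    have hzn : z ^ n = (R : ℂ) * Complex.exp ((((n : ℝ) * φ : ℝ) : ℂ) * Complex.I) := by
      conv_lhs => rw [← Complex.norm_mul_exp_arg_mul_I z]
      rw [mul_pow, ← Complex.exp_nat_mul]
      rw [← hφdef, ← hrdef]
      congr 1
      · rw [hRdef]; norm_cast
      · push_cast; ring
    have hA_eq : A = R * Real.cos ((n : ℝ) * φ) := by
      rw [hAdef, hzn, Complex.re_ofReal_mul, Complex.exp_ofReal_mul_I_re]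
    -- derive cos φ < cos(nφ)
    have hcc : Real.cos φ < Real.cos ((n : ℝ) * φ) := by
      have h3 : (r ^ n * r) * Real.cos φ < (r ^ n * r) * Real.cos ((n : ℝ) * φ) := by
        calc (r ^ n * r) * Real.cos φ = r ^ n * a := by rw [← hcosφ]; ring
          _ < r * A := hB
          _ = (r ^ n * r) * Real.cos ((n : ℝ) * φ) := by rw [hA_eq, hRdef]; ring
      exact lt_of_mul_lt_mul_left h3 (by positivity)
    set ψ : ℝ := |φ| with hψdef
    have hψ0 : 0 ≤ ψ := abs_nonneg φ
    have hcosψ : Real.cos ψ = Real.cos φ := by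
      rcases abs_cases φ with ⟨h, _⟩ | ⟨h, _⟩ <;> rw [hψdef, h] <;> simp [Real.cos_neg]
    have hcosnψ : Real.cos ((n : ℝ) * ψ) = Real.cos ((n : ℝ) * φ) := by
      rcases abs_cases φ with ⟨h, _⟩ | ⟨h, _⟩ <;> rw [hψdef, h]
      rw [show (n : ℝ) * -φ = -((n : ℝ) * φ) by ring, Real.cos_neg]
    have hπpos : 0 < π := Real.pi_pos
    -- ψ > 2π/(n+1)
    have hn1pos : (0 : ℝ) < (n : ℝ) + 1 := by positivity
    have hψbig : 2 * π / ((n : ℝ) + 1) < ψ := by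
      by_contra hcon
      push_neg at hcon
      have h1 : ((n : ℝ) + 1) * ψ ≤ 2 * π := by
        rw [mul_comm]; exact (le_div_iff₀ hn1pos).mp hcon
      have h2 := cos_nmul_le n (by omega) ψ hψ0 h1
      rw [hcosψ, hcosnψ] at h2
      linarith
    -- n ≥ 4
    have hn4 : 4 ≤ n := by
      by_contra hcon
      push_neg at hcon
      have hn3 : (n : ℝ) ≤ 3 := by exact_mod_cast Nat.le_of_lt_succ hcon
      have h2 : π / 2 ≤ 2 * π / ((n : ℝ) + 1) := by
        rw [div_le_div_iff₀ (by norm_num) hn1pos]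
        have h3 := mul_le_mul_of_nonneg_left (show (n : ℝ) + 1 ≤ 4 by linarith) hπpos.le
        linarith
      linarith [hφabs]
    -- r < cos(2π/(n+1))
    have hrcos : r ≤ Real.cos φ := by
      have h1 : r * r ≤ r * Real.cos φ := by
        rw [hcosφ]; linarith [hd]
      exact le_of_mul_le_mul_left h1 hr0
    have hψπ : ψ ≤ π := by linarith [hφabs]
    have hrC : r < Real.cos (2 * π / ((n : ℝ) + 1)) := by
      have h1 : Real.cos ψ < Real.cos (2 * π / ((n : ℝ) + 1)) :=
        Real.cos_lt_cos_of_nonneg_of_le_pi (by positivity) hψπ hψbig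
      rw [hcosψ] at h1
      linarith
    -- 1 - r > 2 sin²(π/(n+1))
    set t : ℝ := π / ((n : ℝ) + 1) with htdef
    have h2t : 2 * π / ((n : ℝ) + 1) = 2 * t := by
      rw [htdef]; ring
    have hcos2t : Real.cos (2 * t) = 1 - 2 * Real.sin t ^ 2 := by
      rw [Real.cos_two_mul]
      linear_combination 2 * (Real.sin_sq_add_cos_sq t)
    have hsin_key : 1 ≤ ((n : ℝ) - 2) * Real.sin t := sin_key n hn4
    have hN4 : (4 : ℝ) ≤ (n : ℝ) := by exact_mod_cast hn4
    have hsin0 : 0 ≤ Real.sin t := by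
      apply Real.sin_nonneg_of_nonneg_of_le_pi (by positivity)
      rw [htdef, div_le_iff₀ hn1pos]
      exact le_mul_of_one_le_right hπpos.le (by linarith)
    have h1r : 1 + r ≤ ((n : ℝ) - 2) ^ 2 * (1 - r) := by
      have h1 : 2 * Real.sin t ^ 2 < 1 - r := by
        rw [h2t, hcos2t] at hrC; linarith
      exact h1r_core ((n : ℝ)) r (Real.sin t) h1 hsin_key hr1
    have hfin := caseB_pow r n hn4 hr0 h1r
    have hfin' : 2 * R - R ^ 2 < r ^ 2 := by rw [hRdef]; exact hfin
    -- 2A - R² ≤ 2R - R² < r² ≤ 2a - r²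
    linarith [hA_le, hd, hfin']
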